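/- (General witness characterization) Let S = {v_1, ..., v_n} be a finite nonempty set of points in ℝ^m and p ∈ ℝ^m. Then p ∈ conv(S) if and only if for every point p' ∈ ℝ^m with p' ≠ p there exists v_j ∈ S such that d(p', v_j) > d(p, v_j). -/

import Mathlib

/-- **General witness characterization**. `p ∈ conv(S)` iff for every point `p' ≠ p` of the
ambient space there is some `v j` strictly farther from `p'` than from `p`. -/
theorem general_witness_characterization {m n : ℕ} (hn : 0 < n)
    (v : Fin n → EuclideanSpace ℝ (Fin m)) (p : EuclideanSpace ℝ (Fin m)) :
    p ∈ convexHull ℝ (Set.range v) ↔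
      ∀ p' : EuclideanSpace ℝ (Fin m), p' ≠ p →
        ∃ j : Fin n, dist p' (v j) > dist p (v j) := by
  constructor
  · intro hp p' hne
    by_contra h
    push_neg at h
    -- the halfspace of points at least as close to p' as to p
    set C : Set (EuclideanSpace ℝ (Fin m)) :=
      {x | inner ℝ (p - p') x ≤ (‖p‖ ^ 2 - ‖p'‖ ^ 2) / 2} with hC
    have hconv : Convex ℝ C :=
      convex_halfSpace_le ((innerSL ℝ (p - p')).toLinearMap).isLinear _
    have hmem : ∀ x, x ∈ C ↔ dist p' x ≤ dist p x := by
      intro x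
      have e1 : dist p' x ^ 2 = ‖p'‖ ^ 2 - 2 * inner ℝ p' x + ‖x‖ ^ 2 := by
        rw [dist_eq_norm, @norm_sub_sq_real]
      have e2 : dist p x ^ 2 = ‖p‖ ^ 2 - 2 * inner ℝ p x + ‖x‖ ^ 2 := by
        rw [dist_eq_norm, @norm_sub_sq_real]
      have hsub : (inner ℝ (p - p') x : ℝ) = inner ℝ p x - inner ℝ p' x := inner_sub_left _ _ _
      constructor
      · intro hx
        simp only [hC, Set.mem_setOf_eq] at hx
        nlinarith [dist_nonneg (x := p') (y := x), dist_nonneg (x := p) (y := x)]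
      · intro hx
        simp only [hC, Set.mem_setOf_eq]
        nlinarith [dist_nonneg (x := p') (y := x), dist_nonneg (x := p) (y := x)]
    have hsubset : convexHull ℝ (Set.range v) ⊆ C := by
      apply convexHull_min _ hconv
      rintro x ⟨j, rfl⟩
      exact (hmem (v j)).2 (h j)
    have : dist p' p ≤ dist p p := (hmem p).1 (hsubset hp)
    rw [dist_self] at this
    exact hne (dist_le_zero.1 this)
  · intro h
    by_contra hp
    set K := convexHull ℝ (Set.range v) with hK
    have hKconv : Convex ℝ K := convex_convexHull ℝ _
    have hKcomp : IsCompact K := (Set.finite_range v).isCompact_convexHull (𝕜 := ℝ)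
    have hKcomplete : IsComplete K := hKcomp.isClosed.isComplete
    have hKne : K.Nonempty := ⟨v ⟨0, hn⟩, subset_convexHull ℝ _ (Set.mem_range_self _)⟩
    obtain ⟨p', hp'K, hp'min⟩ :=
      exists_norm_eq_iInf_of_complete_convex hKne hKcomplete hKconv p
    have hproj : ∀ w ∈ K, (inner ℝ (p - p') (w - p') : ℝ) ≤ 0 :=
      (norm_eq_iInf_iff_real_inner_le_zero hKconv hp'K).1 hp'min
    have hne : p' ≠ p := fun e => hp (e ▸ hp'K)
    obtain ⟨j, hj⟩ := h p' hne
    have hvj : v j ∈ K := subset_convexHull ℝ _ (Set.mem_range_self j)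
    have hip := hproj (v j) hvj
    -- expand squares
    have e1 : dist p (v j) ^ 2 = ‖p - p'‖ ^ 2 - 2 * inner ℝ (p - p') (v j - p') + ‖v j - p'‖ ^ 2 := by
      have : p - v j = (p - p') - (v j - p') := by abel
      rw [dist_eq_norm, this, @norm_sub_sq_real]
    have e2 : dist p' (v j) ^ 2 = ‖v j - p'‖ ^ 2 := by
      rw [dist_eq_norm, ← norm_neg]; congr 1; abel
    have hle : dist p' (v j) ≤ dist p (v j) := by
      nlinarith [dist_nonneg (x := p') (y := v j), dist_nonneg (x := p) (y := v j),
        sq_nonneg (‖p - p'‖)]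
    exact absurd hj (not_lt.2 hle)
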